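/- Correctness of the 3-SAT reduction: let φ be a 3-CNF formula over variables x₁,…,xₙ with clauses C₁,…,C_k, and let A be the alphabet of the 2n literals. Let L₁ = {y₁⋯yₙ : each yᵢ ∈ {xᵢ, ¬xᵢ}} and L₂ = {w₁⋯w_k u : u ∈ L₁ and each wᵢ is a literal of clause Cᵢ}. Then φ is satisfiable if and only if there exist u ∈ L₁ and v ∈ L₂ with c(u) = c(v). -/

import Mathlib

def content {A : Type*} (w : List A) : Set A := {a | a ∈ w}

/-- A literal over variables `Fin nv` is a pair (variable, polarity). -/
abbrev Lit (nv : ℕ) := Fin nv × Bool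

/-- a valuation `f` makes a literal true -/
def litTrue {nv : ℕ} (f : Fin nv → Bool) (l : Lit nv) : Prop := f l.1 = l.2

/-- words encoding valuations: `y₁⋯yₙ` with `yᵢ ∈ {xᵢ, ¬xᵢ}` -/
def L₁ (nv : ℕ) : Set (List (Lit nv)) :=
  {w | ∃ f : Fin nv → Bool, w = List.ofFn fun i => (i, f i)}

/-- words `w₁⋯w_k u` with `u ∈ L₁` and each `wᵢ` a literal of the `i`-th clause -/
def L₂ {nv : ℕ} (clauses : List (List (Lit nv))) : Set (List (Lit nv)) :=
  {w | ∃ g : Fin clauses.length → Lit nv, (∀ j, g j ∈ clauses.get j) ∧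
    ∃ u ∈ L₁ nv, w = (List.ofFn g) ++ u}

lemma mem_enc {nv : ℕ} (f : Fin nv → Bool) (a : Lit nv) :
    a ∈ List.ofFn (fun i => (i, f i)) ↔ f a.1 = a.2 := by
  rw [List.mem_ofFn]
  constructor
  · rintro ⟨i, hi⟩
    obtain ⟨a1, a2⟩ := a
    simp only [Prod.mk.injEq] at hi
    obtain ⟨h1, h2⟩ := hi
    subst h1; exact h2
  · intro h
    obtain ⟨a1, a2⟩ := a
    exact ⟨a1, by simp_all⟩

/-- correctness of the 3-SAT reduction: `φ` is satisfiable iff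
there are `u ∈ L₁` and `v ∈ L₂` with the same content. -/
theorem sat_reduction_correct {nv : ℕ} (clauses : List (List (Lit nv)))
    (h3 : ∀ C ∈ clauses, C.length = 3) :
    (∃ f : Fin nv → Bool, ∀ C ∈ clauses, ∃ l ∈ C, litTrue f l) ↔
    (∃ u ∈ L₁ nv, ∃ v ∈ L₂ clauses, content u = content v) := by
  constructor
  · rintro ⟨f, hf⟩
    set u : List (Lit nv) := List.ofFn (fun i => (i, f i)) with hu
    have hsel : ∀ j : Fin clauses.length, ∃ l ∈ clauses.get j, litTrue f l :=
      fun j => hf _ (List.get_mem clauses j)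
    choose g hg hgt using hsel
    refine ⟨u, ⟨f, rfl⟩, List.ofFn g ++ u, ⟨g, hg, u, ⟨f, rfl⟩, rfl⟩, ?_⟩
    ext a
    simp only [content, Set.mem_setOf_eq, List.mem_append, List.mem_ofFn]
    constructor
    · intro h; exact Or.inr h
    · rintro (⟨j, rfl⟩ | h)
      · exact (mem_enc f (g j)).2 (hgt j)
      · exact h
  · rintro ⟨u, ⟨f, rfl⟩, v, ⟨g, hg, u', ⟨f', rfl⟩, rfl⟩, hc⟩
    have hff' : f' = f := by
      funext i
      have : (i, f' i) ∈ content (List.ofFn fun i => (i, f i)) := by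
        rw [hc]
        simp only [content, Set.mem_setOf_eq, List.mem_append]
        exact Or.inr ((mem_enc f' (i, f' i)).2 rfl)
      exact ((mem_enc f (i, f' i)).1 this).symm
    refine ⟨f, fun C hC => ?_⟩
    obtain ⟨j, hj⟩ := List.mem_iff_get.1 hC
    refine ⟨g j, hj ▸ hg j, ?_⟩
    have : g j ∈ content (List.ofFn fun i => (i, f i)) := by
      rw [hc]
      simp only [content, Set.mem_setOf_eq, List.mem_append]
      exact Or.inl (List.mem_ofFn.2 ⟨j, rfl⟩)
    exact (mem_enc f (g j)).1 this
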